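/- arXiv:2406.12349 — 3 statements merged into one kernel-verified Lean document; each statement's English description precedes it below -/
import Mathlib

section
/- Let T ≥ 1, let β₁, …, β_T ∈ (0,1), set α_t = 1 − β_t and ᾱ_t = ∏_{s=1}^{t} α_s, and let z₀ ∈ ℝ. Suppose ε₁, …, ε_T are independent real random variables on a probability space, each with law gaussianReal 0 1. Define Z₀ = z₀ and Z_t = √α_t · Z_{t−1} + √β_t · ε_t for 1 ≤ t ≤ T. Then for every t with 1 ≤ t ≤ T, the law of Z_t is gaussianReal (√ᾱ_t·z₀) (1−ᾱ_t); equivalently, Z_t has the same distribution as √ᾱ_t·z₀ + √(1−ᾱ_t)·ε for a standard Gaussian ε. -/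
open MeasureTheory ProbabilityTheory Finset Real
open scoped NNReal ENNReal

lemma ddpm_pdf_conv (m₁ m₂ : ℝ) (v₁ v₂ : ℝ≥0) (h₁ : v₁ ≠ 0) (h₂ : v₂ ≠ 0) (y x : ℝ) :
    gaussianPDFReal m₁ v₁ x * gaussianPDFReal (m₂ + x) v₂ y =
    gaussianPDFReal (m₁ + m₂) (v₁ + v₂) y *
      gaussianPDFReal ((m₁ * v₂ + (y - m₂) * v₁) / (v₁ + v₂)) (v₁ * v₂ / (v₁ + v₂)) x := by
  have hV₁ : (0:ℝ) < v₁ := lt_of_le_of_ne v₁.coe_nonneg (by exact_mod_cast (Ne.symm h₁))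
  have hV₂ : (0:ℝ) < v₂ := lt_of_le_of_ne v₂.coe_nonneg (by exact_mod_cast (Ne.symm h₂))
  have hS : (0:ℝ) < (v₁:ℝ) + v₂ := by linarith
  have hw : ((v₁ * v₂ / (v₁ + v₂) : ℝ≥0) : ℝ) = (v₁:ℝ) * v₂ / ((v₁:ℝ) + v₂) := by push_cast; ring
  simp only [gaussianPDFReal, NNReal.coe_add, hw]
  have hpre : Real.sqrt (2 * π * v₁) * Real.sqrt (2 * π * v₂)
      = Real.sqrt (2 * π * ((v₁:ℝ) + v₂)) * Real.sqrt (2 * π * ((v₁:ℝ) * v₂ / ((v₁:ℝ) + v₂))) := by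
    rw [← Real.sqrt_mul (by positivity), ← Real.sqrt_mul (by positivity)]
    congr 1
    field_simp
  have hexp : -(x - m₁) ^ 2 / (2 * v₁) + -(y - (m₂ + x)) ^ 2 / (2 * v₂)
      = -(y - (m₁ + m₂)) ^ 2 / (2 * ((v₁:ℝ) + v₂))
        + -(x - (m₁ * v₂ + (y - m₂) * v₁) / ((v₁:ℝ) + v₂)) ^ 2
          / (2 * ((v₁:ℝ) * v₂ / ((v₁:ℝ) + v₂))) := by
    field_simp
    ring
  calc (Real.sqrt (2 * π * v₁))⁻¹ * rexp (-(x - m₁) ^ 2 / (2 * v₁)) *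
        ((Real.sqrt (2 * π * v₂))⁻¹ * rexp (-(y - (m₂ + x)) ^ 2 / (2 * v₂)))
      = (Real.sqrt (2 * π * v₁) * Real.sqrt (2 * π * v₂))⁻¹ *
          rexp (-(x - m₁) ^ 2 / (2 * v₁) + -(y - (m₂ + x)) ^ 2 / (2 * v₂)) := by
        rw [Real.exp_add, mul_inv]; ring
    _ = _ := by rw [hpre, hexp, Real.exp_add, mul_inv]; ring

lemma ddpm_gaussian_conv (m₁ m₂ : ℝ) (v₁ v₂ : ℝ≥0) :
    Measure.conv (gaussianReal m₁ v₁) (gaussianReal m₂ v₂) = gaussianReal (m₁ + m₂) (v₁ + v₂) := by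
  by_cases h₁ : v₁ = 0
  · subst h₁
    rw [show Measure.conv (gaussianReal m₁ 0) (gaussianReal m₂ v₂) = Measure.map (fun p : ℝ × ℝ => p.1 + p.2) ((gaussianReal m₁ 0).prod (gaussianReal m₂ v₂)) from rfl, gaussianReal_zero_var, Measure.dirac_prod,
      Measure.map_map measurable_add measurable_prodMk_left]
    simpa [Function.comp_def, add_comm] using gaussianReal_map_const_add (μ := m₂) (v := v₂) m₁
  by_cases h₂ : v₂ = 0
  · subst h₂
    rw [show Measure.conv (gaussianReal m₁ v₁) (gaussianReal m₂ 0) = Measure.map (fun p : ℝ × ℝ => p.1 + p.2) ((gaussianReal m₁ v₁).prod (gaussianReal m₂ 0)) from rfl, gaussianReal_zero_var, Measure.prod_dirac,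
      Measure.map_map measurable_add (measurable_prodMk_right)]
    simpa [Function.comp_def] using gaussianReal_map_add_const (μ := m₁) (v := v₁) m₂
  -- main case
  have hw : (v₁ * v₂ / (v₁ + v₂) : ℝ≥0) ≠ 0 := by
    refine div_ne_zero (mul_ne_zero h₁ h₂) ?_
    simp [h₁, h₂]
  have hsum : v₁ + v₂ ≠ 0 := by simp [h₁]
  ext s hs
  rw [show Measure.conv (gaussianReal m₁ v₁) (gaussianReal m₂ v₂) = Measure.map (fun p : ℝ × ℝ => p.1 + p.2) ((gaussianReal m₁ v₁).prod (gaussianReal m₂ v₂)) from rfl, Measure.map_apply measurable_add hs,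
    Measure.prod_apply (measurable_add hs)]
  have step1 : ∀ x : ℝ, gaussianReal m₂ v₂ (Prod.mk x ⁻¹' ((fun p : ℝ × ℝ => p.1 + p.2) ⁻¹' s))
      = ∫⁻ y in s, gaussianPDF (m₂ + x) v₂ y := by
    intro x
    have : Prod.mk x ⁻¹' ((fun p : ℝ × ℝ => p.1 + p.2) ⁻¹' s) = (fun y => x + y) ⁻¹' s := rfl
    rw [this, ← Measure.map_apply (measurable_const_add x) hs,
      gaussianReal_map_const_add, gaussianReal_of_var_ne_zero _ h₂, withDensity_apply _ hs]
  simp_rw [step1]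
  have hFmeas : Measurable (fun p : ℝ × ℝ => gaussianPDF (m₂ + p.1) v₂ p.2) := by
    simp only [gaussianPDF, gaussianPDFReal]
    fun_prop
  have hinner : Measurable fun x => ∫⁻ y in s, gaussianPDF (m₂ + x) v₂ y := by
    exact Measurable.lintegral_prod_right hFmeas
  rw [gaussianReal_of_var_ne_zero _ h₁,
    lintegral_withDensity_eq_lintegral_mul _ (measurable_gaussianPDF _ _) hinner]
  have swap : ∫⁻ x, (gaussianPDF m₁ v₁ * fun x => ∫⁻ y in s, gaussianPDF (m₂ + x) v₂ y) x
      = ∫⁻ y in s, ∫⁻ x, gaussianPDF m₁ v₁ x * gaussianPDF (m₂ + x) v₂ y := by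
    have e1 : ∀ x : ℝ, gaussianPDF m₁ v₁ x * ∫⁻ y in s, gaussianPDF (m₂ + x) v₂ y
        = ∫⁻ y in s, gaussianPDF m₁ v₁ x * gaussianPDF (m₂ + x) v₂ y :=
      fun x => (lintegral_const_mul _ (measurable_gaussianPDF _ _)).symm
    simp only [Pi.mul_apply]
    simp_rw [e1]
    exact lintegral_lintegral_swap
      ((measurable_gaussianPDF m₁ v₁).comp measurable_fst |>.mul hFmeas).aemeasurable
  rw [swap]
  have hinner2 : ∀ y : ℝ, (∫⁻ x, gaussianPDF m₁ v₁ x * gaussianPDF (m₂ + x) v₂ y)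
      = gaussianPDF (m₁ + m₂) (v₁ + v₂) y := by
    intro y
    have : ∀ x : ℝ, gaussianPDF m₁ v₁ x * gaussianPDF (m₂ + x) v₂ y
        = gaussianPDF (m₁ + m₂) (v₁ + v₂) y *
          gaussianPDF ((m₁ * v₂ + (y - m₂) * v₁) / (v₁ + v₂)) (v₁ * v₂ / (v₁ + v₂)) x := by
      intro x
      simp only [gaussianPDF]
      rw [← ENNReal.ofReal_mul (gaussianPDFReal_nonneg _ _ _),
        ← ENNReal.ofReal_mul (gaussianPDFReal_nonneg _ _ _),
        ddpm_pdf_conv m₁ m₂ v₁ v₂ h₁ h₂ y x]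
    simp_rw [this]
    rw [lintegral_const_mul _ (measurable_gaussianPDF _ _), lintegral_gaussianPDF_eq_one _ hw,
      mul_one]
  simp_rw [hinner2]
  rw [gaussianReal_of_var_ne_zero _ hsum, withDensity_apply _ hs]

lemma ddpm_map_add_of_indep {Ω : Type*} [MeasurableSpace Ω] (P : Measure Ω)
    [IsProbabilityMeasure P] {X Y : Ω → ℝ} (hX : Measurable X) (hY : Measurable Y)
    (h : IndepFun X Y P) :
    P.map (fun ω => X ω + Y ω) = Measure.conv (P.map X) (P.map Y) := by
  have hprod := (indepFun_iff_map_prod_eq_prod_map_map hX.aemeasurable hY.aemeasurable).mp h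
  have : (fun ω => X ω + Y ω) = (fun p : ℝ × ℝ => p.1 + p.2) ∘ (fun ω => (X ω, Y ω)) := rfl
  rw [this, ← Measure.map_map measurable_add (hX.prodMk hY), hprod]
  rfl

/-- Closed-form marginal of the DDPM forward noising process: with `β_t ∈ (0,1)`,
`α_t = 1 − β_t`, `ᾱ_t = ∏_{s=1}^t α_s`, independent standard Gaussians `ε_1, …, ε_T`,
`Z_0 = z₀` and `Z_t = √α_t·Z_{t−1} + √β_t·ε_t`, the law of `Z_t` is
`N(√ᾱ_t·z₀, 1−ᾱ_t)` for all `1 ≤ t ≤ T`. -/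
theorem ddpm_forward_marginal {Ω : Type*} [MeasurableSpace Ω]
    (P : Measure Ω) [IsProbabilityMeasure P]
    (T : ℕ) (hT : 1 ≤ T) (β : ℕ → ℝ) (hβ : ∀ t, 1 ≤ t → t ≤ T → β t ∈ Set.Ioo (0 : ℝ) 1)
    (α : ℕ → ℝ) (hα : ∀ t, α t = 1 - β t)
    (ᾱ : ℕ → ℝ) (hᾱ : ∀ t, ᾱ t = ∏ s ∈ Finset.Icc 1 t, α s)
    (z₀ : ℝ) (ε : ℕ → Ω → ℝ) (hεmeas : ∀ t, Measurable (ε t))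
    (hεindep : iIndepFun ε P)
    (hεlaw : ∀ t, 1 ≤ t → t ≤ T → P.map (ε t) = gaussianReal 0 1)
    (Z : ℕ → Ω → ℝ) (hZ0 : Z 0 = fun _ => z₀)
    (hZ : ∀ t, 1 ≤ t → t ≤ T →
      Z t = fun ω => Real.sqrt (α t) * Z (t - 1) ω + Real.sqrt (β t) * ε t ω) :
    ∀ t, 1 ≤ t → t ≤ T →
      P.map (Z t) = gaussianReal (Real.sqrt (ᾱ t) * z₀) (1 - ᾱ t).toNNReal := by
  have hα01 : ∀ s, 1 ≤ s → s ≤ T → 0 < α s ∧ α s ≤ 1 := by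
    intro s h1 h2
    obtain ⟨hb1, hb2⟩ := hβ s h1 h2
    rw [hα]; constructor <;> linarith
  have hᾱ01 : ∀ t, t ≤ T → 0 ≤ ᾱ t ∧ ᾱ t ≤ 1 := by
    intro t ht
    rw [hᾱ]
    constructor
    · exact Finset.prod_nonneg fun s hs => by
        rw [Finset.mem_Icc] at hs; exact (hα01 s hs.1 (hs.2.trans ht)).1.le
    · exact Finset.prod_le_one
        (fun s hs => by rw [Finset.mem_Icc] at hs; exact (hα01 s hs.1 (hs.2.trans ht)).1.le)
        (fun s hs => by rw [Finset.mem_Icc] at hs; exact (hα01 s hs.1 (hs.2.trans ht)).2)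
  -- structure lemma
  have hstruct : ∀ t, t ≤ T → ∃ g : (Finset.Icc 1 t → ℝ) → ℝ,
      Measurable g ∧ Z t = fun ω => g (fun i => ε i ω) := by
    intro t
    induction t with
    | zero => exact fun _ => ⟨fun _ => z₀, measurable_const, by rw [hZ0]⟩
    | succ t ih =>
      intro h
      obtain ⟨g, hg, hgZ⟩ := ih (by omega)
      refine ⟨fun h' => Real.sqrt (α (t+1)) *
          g (fun i => h' ⟨i.1, by have := i.2; simp only [Finset.mem_Icc] at this ⊢; omega⟩)
          + Real.sqrt (β (t+1)) * h' ⟨t+1, by simp [Finset.mem_Icc]⟩, ?_, ?_⟩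
      · exact ((hg.comp (measurable_pi_lambda _ fun i => measurable_pi_apply _)).const_mul
          _).add ((measurable_pi_apply _).const_mul _)
      · rw [hZ (t+1) (by omega) h]
        funext ω
        simp only [Nat.add_sub_cancel, hgZ]
  have hZmeas : ∀ t, t ≤ T → Measurable (Z t) := by
    intro t ht
    obtain ⟨g, hg, hgZ⟩ := hstruct t ht
    rw [hgZ]
    exact hg.comp (measurable_pi_lambda _ fun i => hεmeas i)
  have hindep : ∀ t, t + 1 ≤ T → IndepFun (Z t) (ε (t+1)) P := by
    intro t ht
    obtain ⟨g, hg, hgZ⟩ := hstruct t (by omega)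
    have hdisj : Disjoint (Finset.Icc 1 t) ({t+1} : Finset ℕ) := by
      simp only [Finset.disjoint_singleton_right, Finset.mem_Icc]; omega
    have h0 := hεindep.indepFun_finset (Finset.Icc 1 t) {t+1} hdisj hεmeas
    have h1 := h0.comp hg
      (measurable_pi_apply (⟨t+1, by simp⟩ : ({t+1} : Finset ℕ)))
    rw [hgZ]
    exact h1
  have main : ∀ t, t ≤ T →
      P.map (Z t) = gaussianReal (Real.sqrt (ᾱ t) * z₀) (1 - ᾱ t).toNNReal := by
    intro t
    induction t with
    | zero =>
      intro _
      have h0 : ᾱ 0 = 1 := by rw [hᾱ]; simp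
      rw [hZ0, h0]
      simp [Measure.map_const, Real.sqrt_one]
    | succ t ih =>
      intro h
      have ht : t ≤ T := by omega
      have hZt := ih ht
      have hZtm := hZmeas t ht
      have hXY : IndepFun (fun ω => Real.sqrt (α (t+1)) * Z t ω)
          (fun ω => Real.sqrt (β (t+1)) * ε (t+1) ω) P :=
        (hindep t h).comp (measurable_const_mul _) (measurable_const_mul _)
      rw [hZ (t+1) (by omega) h]
      simp only [Nat.add_sub_cancel]
      rw [ddpm_map_add_of_indep P (hZtm.const_mul _) ((hεmeas _).const_mul _) hXY]
      have hmapX : P.map (fun ω => Real.sqrt (α (t+1)) * Z t ω)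
          = gaussianReal (Real.sqrt (α (t+1)) * (Real.sqrt (ᾱ t) * z₀))
            (NNReal.mk ((Real.sqrt (α (t+1)))^2) (sq_nonneg _) * (1 - ᾱ t).toNNReal) := by
        have he : (fun ω => Real.sqrt (α (t+1)) * Z t ω)
            = (fun x => Real.sqrt (α (t+1)) * x) ∘ Z t := rfl
        rw [he, ← Measure.map_map (measurable_const_mul _) hZtm, hZt,
          gaussianReal_map_const_mul]
      have hmapY : P.map (fun ω => Real.sqrt (β (t+1)) * ε (t+1) ω)
          = gaussianReal 0 (NNReal.mk ((Real.sqrt (β (t+1)))^2) (sq_nonneg _)) := by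
        have he : (fun ω => Real.sqrt (β (t+1)) * ε (t+1) ω)
            = (fun x => Real.sqrt (β (t+1)) * x) ∘ ε (t+1) := rfl
        rw [he, ← Measure.map_map (measurable_const_mul _) (hεmeas _),
          hεlaw (t+1) (by omega) h, gaussianReal_map_const_mul]
        simp
      rw [hmapX, hmapY, ddpm_gaussian_conv]
      have hαβ := hβ (t+1) (by omega) h
      have hαpos := (hα01 (t+1) (by omega) h).1
      have hᾱsucc : ᾱ (t+1) = ᾱ t * α (t+1) := by
        rw [hᾱ, hᾱ, Finset.prod_Icc_succ_top (by omega)]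
      have hᾱt0 := (hᾱ01 t ht).1
      have hᾱt1 := (hᾱ01 t ht).2
      have hᾱs0 := (hᾱ01 (t+1) h).1
      have hᾱs1 := (hᾱ01 (t+1) h).2
      congr 1
      · rw [add_zero, hᾱsucc, Real.sqrt_mul hᾱt0]
        ring
      · apply NNReal.coe_injective
        push_cast
        rw [Real.coe_toNNReal _ (by linarith), Real.coe_toNNReal _ (by linarith),
          Real.sq_sqrt hαpos.le, Real.sq_sqrt hαβ.1.le]
        rw [hᾱsucc, hα (t+1)]
        ring
  exact fun t _ h2 => main t h2
end

section
/- Let ᾱ_t ∈ (0,1), ᾱ_{t−1} ∈ (0,1], σ ≥ 0 with σ² ≤ 1 − ᾱ_{t−1}, and z₀ ∈ ℝ. Suppose ε and ε′ are independent real random variables, each with law gaussianReal 0 1. Define Z_t = √ᾱ_t·z₀ + √(1−ᾱ_t)·ε and Z_{t−1} = √ᾱ_{t−1}·z₀ + √(1−ᾱ_{t−1}−σ²) · (Z_t − √ᾱ_t·z₀)/√(1−ᾱ_t) + σ·ε′. Then the law of Z_{t−1} is gaussianReal (√ᾱ_{t−1}·z₀) (1−ᾱ_{t−1}). -/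
open MeasureTheory ProbabilityTheory Real
open scoped NNReal ENNReal

lemma nnreal_mk_ne_zero {x : ℝ} (hx : 0 < x) (h0 : 0 ≤ x) : (⟨x, h0⟩ : ℝ≥0) ≠ 0 := by
  simp only [ne_eq, ← NNReal.coe_eq_zero, NNReal.coe_mk]
  exact ne_of_gt hx

lemma nnreal_coe_subtype_mk (x : ℝ) (h : 0 ≤ x) : ((⟨x, h⟩ : ℝ≥0) : ℝ) = x := rfl

lemma gaussianPDFReal_conv (a b z x : ℝ) (ha : a ≠ 0) (hb : b ≠ 0) :
    gaussianPDFReal 0 1 x * gaussianPDFReal (a*x) (⟨b^2, sq_nonneg b⟩ : ℝ≥0) z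
      = gaussianPDFReal 0 (⟨a^2+b^2, by positivity⟩ : ℝ≥0) z
        * gaussianPDFReal (a*z/(a^2+b^2)) (⟨b^2/(a^2+b^2), by positivity⟩ : ℝ≥0) x := by
  have hs : (0:ℝ) < a^2+b^2 := by positivity
  have hb2 : (0:ℝ) < b^2 := by positivity
  simp only [gaussianPDFReal, NNReal.coe_mk, NNReal.coe_one]
  change (√(2*π*1))⁻¹ * rexp (-(x-0)^2/(2*1)) * ((√(2*π*(b^2)))⁻¹ * rexp (-(z-a*x)^2/(2*(b^2))))
    = (√(2*π*(a^2+b^2)))⁻¹ * rexp (-(z-0)^2/(2*(a^2+b^2)))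
      * ((√(2*π*(b^2/(a^2+b^2))))⁻¹ * rexp (-(x-a*z/(a^2+b^2))^2/(2*(b^2/(a^2+b^2)))))
  rw [mul_mul_mul_comm, ← Real.exp_add, ← mul_inv, ← Real.sqrt_mul (by positivity),
      mul_mul_mul_comm ((√(2*π*(a^2+b^2)))⁻¹) (rexp (-(z-0)^2/(2*(a^2+b^2)))),
      ← Real.exp_add, ← mul_inv, ← Real.sqrt_mul (by positivity)]
  have h1 : (2*π*1)*(2*π*b^2) = (2*π*(a^2+b^2))*(2*π*(b^2/(a^2+b^2))) := by
    field_simp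
  have h2 : -(x-0)^2/(2*1) + -(z-a*x)^2/(2*b^2)
      = -(z-0)^2/(2*(a^2+b^2)) + -(x-a*z/(a^2+b^2))^2/(2*(b^2/(a^2+b^2))) := by
    field_simp
    ring
  rw [h1, h2]

lemma gaussian_prod_map (a b : ℝ) (ha : a ≠ 0) (hb : b ≠ 0) :
    ((gaussianReal 0 1).prod (gaussianReal 0 1)).map (fun p : ℝ × ℝ => a * p.1 + b * p.2)
      = gaussianReal 0 (⟨a^2+b^2, by positivity⟩ : ℝ≥0) := by
  have hvb : (⟨b^2, sq_nonneg b⟩ : ℝ≥0) ≠ 0 := nnreal_mk_ne_zero (by positivity) _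
  have hvs : (⟨a^2+b^2, by positivity⟩ : ℝ≥0) ≠ 0 := nnreal_mk_ne_zero (by positivity) _
  have hT : Measurable fun p : ℝ × ℝ => a * p.1 + b * p.2 := by fun_prop
  ext t ht
  rw [Measure.map_apply hT ht, Measure.prod_apply (hT ht)]
  have key : ∀ x : ℝ, (gaussianReal 0 1) (Prod.mk x ⁻¹' ((fun p : ℝ × ℝ => a * p.1 + b * p.2) ⁻¹' t))
      = ∫⁻ z in t, gaussianPDF (a*x) (⟨b^2, sq_nonneg b⟩ : ℝ≥0) z := by
    intro x
    have h1 : (gaussianReal 0 1).map (fun y : ℝ => a*x + b*y)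
        = gaussianReal (a*x) (⟨b^2, sq_nonneg b⟩ : ℝ≥0) := by
      have hc : (fun y : ℝ => a*x + b*y) = (fun y : ℝ => a*x + y) ∘ (fun y : ℝ => b*y) := rfl
      rw [hc, ← Measure.map_map (measurable_const_add (a*x)) (by fun_prop : Measurable fun y : ℝ => b*y)]
      have := gaussianReal_map_const_mul (μ := 0) (v := 1) b
      rw [this, gaussianReal_map_const_add]
      norm_num
      rfl
    rw [← gaussianReal_apply _ hvb t, ← h1, Measure.map_apply (by fun_prop) ht]
    rfl
  simp_rw [key]
  rw [gaussianReal_apply _ hvs t, gaussianReal_of_var_ne_zero _ one_ne_zero,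
    lintegral_withDensity_eq_lintegral_mul _ (measurable_gaussianPDF _ _)
      (Measurable.lintegral_prod_right (f := fun x z : ℝ => gaussianPDF (a*x) (⟨b^2, sq_nonneg b⟩ : ℝ≥0) z) (by
        unfold Function.uncurry gaussianPDF gaussianPDFReal
        fun_prop))]
  simp only [Pi.mul_apply]
  have hswap : ∫⁻ x, gaussianPDF 0 1 x * ∫⁻ z in t, gaussianPDF (a*x) (⟨b^2, sq_nonneg b⟩ : ℝ≥0) z
      = ∫⁻ z in t, ∫⁻ x, gaussianPDF 0 1 x * gaussianPDF (a*x) (⟨b^2, sq_nonneg b⟩ : ℝ≥0) z := by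
    have hpull : ∀ x : ℝ, gaussianPDF 0 1 x * ∫⁻ z in t, gaussianPDF (a*x) (⟨b^2, sq_nonneg b⟩ : ℝ≥0) z
        = ∫⁻ z in t, gaussianPDF 0 1 x * gaussianPDF (a*x) (⟨b^2, sq_nonneg b⟩ : ℝ≥0) z :=
      fun x => (lintegral_const_mul' _ _ ENNReal.ofReal_ne_top).symm
    simp_rw [hpull]
    rw [lintegral_lintegral_swap]
    apply Measurable.aemeasurable
    refine Measurable.mul (f := fun p : ℝ × ℝ => gaussianPDF 0 1 p.1)
      (g := fun p : ℝ × ℝ => gaussianPDF (a*p.1) (⟨b^2, sq_nonneg b⟩ : ℝ≥0) p.2) ?_ ?_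
    · unfold gaussianPDF gaussianPDFReal
      fun_prop
    · unfold gaussianPDF gaussianPDFReal
      fun_prop
  rw [hswap]
  refine setLIntegral_congr_fun ht (fun z _ => ?_)
  calc ∫⁻ x, gaussianPDF 0 1 x * gaussianPDF (a*x) (⟨b^2, sq_nonneg b⟩ : ℝ≥0) z
      = ∫⁻ x, ENNReal.ofReal (gaussianPDFReal 0 (⟨a^2+b^2, by positivity⟩ : ℝ≥0) z)
          * ENNReal.ofReal (gaussianPDFReal (a*z/(a^2+b^2)) (⟨b^2/(a^2+b^2), by positivity⟩ : ℝ≥0) x) := by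
        congr 1 with x
        unfold gaussianPDF
        erw [← ENNReal.ofReal_mul (gaussianPDFReal_nonneg _ _ _),
          gaussianPDFReal_conv a b z x ha hb,
          ENNReal.ofReal_mul (gaussianPDFReal_nonneg _ _ _)]
    _ = gaussianPDF 0 (⟨a^2+b^2, by positivity⟩ : ℝ≥0) z := by
        rw [lintegral_const_mul' _ _ ENNReal.ofReal_ne_top,
          lintegral_gaussianPDFReal_eq_one _ (nnreal_mk_ne_zero (by positivity) _), mul_one]
        rfl

lemma gaussian_sum_indep {Ω : Type*} [MeasurableSpace Ω] (P : Measure Ω) [IsProbabilityMeasure P]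
    (a b : ℝ) (ε ε' : Ω → ℝ) (hε : Measurable ε) (hε' : Measurable ε')
    (hindep : IndepFun ε ε' P) (hεlaw : P.map ε = gaussianReal 0 1)
    (hε'law : P.map ε' = gaussianReal 0 1) :
    P.map (fun ω => a * ε ω + b * ε' ω) = gaussianReal 0 (⟨a^2+b^2, by positivity⟩ : ℝ≥0) := by
  by_cases ha : a = 0
  · subst ha
    have hfe : (fun ω => (0:ℝ) * ε ω + b * ε' ω) = (fun y : ℝ => b * y) ∘ ε' := by
      funext ω; simp
    rw [hfe, ← Measure.map_map (by fun_prop) hε', hε'law, gaussianReal_map_const_mul]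
    congr 1
    · norm_num
    · apply NNReal.coe_injective
      push_cast
      exact (by ring : b^2*1 = 0^2+b^2)
  by_cases hb : b = 0
  · subst hb
    have hfe : (fun ω => a * ε ω + (0:ℝ) * ε' ω) = (fun y : ℝ => a * y) ∘ ε := by
      funext ω; simp
    rw [hfe, ← Measure.map_map (by fun_prop) hε, hεlaw, gaussianReal_map_const_mul]
    congr 1
    · norm_num
    · apply NNReal.coe_injective
      push_cast
      exact (by ring : a^2*1 = a^2+0^2)
  have hpair : P.map (fun ω => (ε ω, ε' ω)) = (gaussianReal 0 1).prod (gaussianReal 0 1) := by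
    exact ((indepFun_iff_map_prod_eq_prod_map_map hε.aemeasurable hε'.aemeasurable).mp
      hindep).trans (by rw [hεlaw, hε'law])
  have hfe : (fun ω => a * ε ω + b * ε' ω)
      = (fun p : ℝ × ℝ => a * p.1 + b * p.2) ∘ (fun ω => (ε ω, ε' ω)) := rfl
  rw [hfe, ← Measure.map_map (by fun_prop) (hε.prodMk hε'), hpair, gaussian_prod_map a b ha hb]


/-- Marginal consistency of the non-Markovian (DDIM) reverse transition: with
`Z_t = √ᾱ_t·z₀ + √(1−ᾱ_t)·ε` and
`Z_{t−1} = √ᾱ_{t−1}·z₀ + √(1−ᾱ_{t−1}−σ²)·(Z_t − √ᾱ_t·z₀)/√(1−ᾱ_t) + σ·ε′`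
for independent standard Gaussians `ε, ε′`, the law of `Z_{t−1}` is
`N(√ᾱ_{t−1}·z₀, 1−ᾱ_{t−1})`. -/
theorem ddim_reverse_marginal {Ω : Type*} [MeasurableSpace Ω]
    (P : Measure Ω) [IsProbabilityMeasure P]
    (ᾱt ᾱprev σ : ℝ) (hᾱt : ᾱt ∈ Set.Ioo (0 : ℝ) 1) (hᾱprev : ᾱprev ∈ Set.Ioc (0 : ℝ) 1)
    (hσ : 0 ≤ σ) (hσ2 : σ ^ 2 ≤ 1 - ᾱprev)
    (z₀ : ℝ) (ε ε' : Ω → ℝ) (hε : Measurable ε) (hε' : Measurable ε')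
    (hindep : IndepFun ε ε' P)
    (hεlaw : P.map ε = gaussianReal 0 1) (hε'law : P.map ε' = gaussianReal 0 1)
    (Zt Zprev : Ω → ℝ)
    (hZt : Zt = fun ω => Real.sqrt ᾱt * z₀ + Real.sqrt (1 - ᾱt) * ε ω)
    (hZprev : Zprev = fun ω => Real.sqrt ᾱprev * z₀
      + Real.sqrt (1 - ᾱprev - σ ^ 2) * ((Zt ω - Real.sqrt ᾱt * z₀) / Real.sqrt (1 - ᾱt))
      + σ * ε' ω) :
    P.map Zprev = gaussianReal (Real.sqrt ᾱprev * z₀) (1 - ᾱprev).toNNReal := by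
  set a : ℝ := Real.sqrt (1 - ᾱprev - σ ^ 2) with ha_def
  have hαt1 : (0:ℝ) < 1 - ᾱt := by linarith [hᾱt.2]
  have hsqrt_ne : Real.sqrt (1 - ᾱt) ≠ 0 := ne_of_gt (Real.sqrt_pos.mpr hαt1)
  have harg : (0:ℝ) ≤ 1 - ᾱprev - σ ^ 2 := by linarith
  have ha2 : a ^ 2 = 1 - ᾱprev - σ ^ 2 := Real.sq_sqrt harg
  have hZ : Zprev = fun ω => Real.sqrt ᾱprev * z₀ + (a * ε ω + σ * ε' ω) := by
    funext ω
    simp only [hZprev, hZt]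
    have : (Real.sqrt ᾱt * z₀ + Real.sqrt (1 - ᾱt) * ε ω - Real.sqrt ᾱt * z₀)
        / Real.sqrt (1 - ᾱt) = ε ω := by
      field_simp
      ring
    rw [this]
    ring
  have hsum := gaussian_sum_indep P a σ ε ε' hε hε' hindep hεlaw hε'law
  have hfe : Zprev = (fun y : ℝ => Real.sqrt ᾱprev * z₀ + y) ∘ (fun ω => a * ε ω + σ * ε' ω) := by
    rw [hZ]; rfl
  rw [hfe, ← Measure.map_map (measurable_const_add _) (by fun_prop), hsum]
  erw [gaussianReal_map_const_add]
  congr 1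
  · ring
  · apply NNReal.coe_injective
    change a^2+σ^2 = _
    rw [Real.coe_toNNReal _ (by linarith [sq_nonneg σ])]
    rw [ha2]; ring
end

section
/- Let β_t ∈ (0,1) and ᾱ_{t−1} ∈ (0,1), set α_t = 1 − β_t and ᾱ_t = α_t · ᾱ_{t−1}, define a = √α_t·(1−ᾱ_{t−1})/(1−ᾱ_t), b = √ᾱ_{t−1}·β_t/(1−ᾱ_t), β̃ = (1−ᾱ_{t−1})·β_t/(1−ᾱ_t), and let z₀ ∈ ℝ. Suppose Z_t and ε′ are independent real random variables, with the law of Z_t equal to gaussianReal (√ᾱ_t·z₀) (1−ᾱ_t) and the law of ε′ equal to gaussianReal 0 1. Then the law of a·Z_t + b·z₀ + √β̃·ε′ is gaussianReal (√ᾱ_{t−1}·z₀) (1−ᾱ_{t−1}). -/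
open MeasureTheory ProbabilityTheory Real
open scoped NNReal ENNReal

namespace DDPMAux

lemma measurable_shift_pdf (μ₂ : ℝ) (v₂ : ℝ≥0) (y : ℝ) :
    Measurable (fun x : ℝ => gaussianPDFReal (μ₂ + x) v₂ y) := by
  simp only [gaussianPDFReal]
  fun_prop

lemma pdf_le_const (m : ℝ) (v : ℝ≥0) (y : ℝ) :
    gaussianPDFReal m v y ≤ (Real.sqrt (2 * π * v))⁻¹ := by
  rw [gaussianPDFReal]
  have h1 : Real.exp (-(y - m)^2 / (2 * v)) ≤ 1 := by
    rw [Real.exp_le_one_iff]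
    apply div_nonpos_of_nonpos_of_nonneg (neg_nonpos.2 (sq_nonneg _)) (by positivity)
  calc (Real.sqrt (2 * π * v))⁻¹ * Real.exp (-(y - m)^2 / (2 * v))
      ≤ (Real.sqrt (2 * π * v))⁻¹ * 1 := by
        apply mul_le_mul_of_nonneg_left h1 (by positivity)
    _ = _ := mul_one _

lemma integrable_conv_integrand (μ₁ μ₂ : ℝ) (v₁ v₂ : ℝ≥0) (y : ℝ) :
    Integrable (fun x => gaussianPDFReal μ₁ v₁ x * gaussianPDFReal (μ₂ + x) v₂ y) := by
  have := (integrable_gaussianPDFReal μ₁ v₁).bdd_mul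
    ((measurable_shift_pdf μ₂ v₂ y).aestronglyMeasurable)
    (c := (Real.sqrt (2 * π * v₂))⁻¹) (ae_of_all _ fun x => by
      rw [Real.norm_eq_abs, abs_of_nonneg (gaussianPDFReal_nonneg _ _ _)]
      exact pdf_le_const _ _ _)
  simpa [mul_comm] using this

lemma gaussianPDFReal_conv (μ₁ μ₂ : ℝ) (v₁ v₂ : ℝ≥0) (h₁ : v₁ ≠ 0) (h₂ : v₂ ≠ 0) (y : ℝ) :
    (∫ x, gaussianPDFReal μ₁ v₁ x * gaussianPDFReal (μ₂ + x) v₂ y)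
      = gaussianPDFReal (μ₁ + μ₂) (v₁ + v₂) y := by
  have hv₁ : (0:ℝ) < v₁ := lt_of_le_of_ne v₁.coe_nonneg (by exact_mod_cast (Ne.symm h₁))
  have hv₂ : (0:ℝ) < v₂ := lt_of_le_of_ne v₂.coe_nonneg (by exact_mod_cast (Ne.symm h₂))
  set V : ℝ := (v₁:ℝ) + v₂ with hV
  have hVpos : (0:ℝ) < V := by positivity
  set bb : ℝ := V / (2 * v₁ * v₂) with hbb
  have hbpos : 0 < bb := by positivity
  set c : ℝ := μ₁ + v₁ * (y - μ₁ - μ₂) / V with hc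
  set K : ℝ := (Real.sqrt (2 * π * v₁))⁻¹ * (Real.sqrt (2 * π * v₂))⁻¹
      * Real.exp (-(y - μ₁ - μ₂)^2 / (2 * V)) with hK
  have hexp : ∀ x : ℝ, -(x - μ₁)^2 / (2 * (v₁:ℝ)) + -(y - (μ₂ + x))^2 / (2 * (v₂:ℝ))
      = -(y - μ₁ - μ₂)^2 / (2 * V) + -bb * (x - c)^2 := by
    intro x
    rw [hbb, hc, hV]
    field_simp
    ring
  have hfun : ∀ x, gaussianPDFReal μ₁ v₁ x * gaussianPDFReal (μ₂ + x) v₂ y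
      = K * Real.exp (-bb * (x - c)^2) := by
    intro x
    calc gaussianPDFReal μ₁ v₁ x * gaussianPDFReal (μ₂ + x) v₂ y
        = (Real.sqrt (2 * π * v₁))⁻¹ * (Real.sqrt (2 * π * v₂))⁻¹
            * Real.exp (-(x - μ₁)^2 / (2 * (v₁:ℝ)) + -(y - (μ₂ + x))^2 / (2 * (v₂:ℝ))) := by
          rw [gaussianPDFReal, gaussianPDFReal, Real.exp_add]; ring
      _ = K * Real.exp (-bb * (x - c)^2) := by
          rw [hexp x, Real.exp_add, hK]; ring
  rw [funext hfun, integral_const_mul]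
  have hshift : (∫ x, Real.exp (-bb * (x - c)^2)) = ∫ x, Real.exp (-bb * x^2) :=
    integral_sub_right_eq_self (fun t => Real.exp (-bb * t^2)) c
  rw [hshift, integral_gaussian, gaussianPDFReal, hK]
  have hcast : ((v₁ + v₂ : ℝ≥0) : ℝ) = V := by rw [hV]; push_cast; ring
  rw [hcast]
  have hKconst : (Real.sqrt (2 * π * v₁))⁻¹ * (Real.sqrt (2 * π * v₂))⁻¹ * Real.sqrt (π / bb)
      = (Real.sqrt (2 * π * V))⁻¹ := by
    rw [← Real.sqrt_inv, ← Real.sqrt_inv, ← Real.sqrt_mul (by positivity),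
      ← Real.sqrt_mul (by positivity), ← Real.sqrt_inv]
    congr 1
    rw [hbb]
    field_simp
  rw [← hKconst]
  ring

lemma lintegral_gaussianPDF_conv (μ₁ μ₂ : ℝ) (v₁ v₂ : ℝ≥0) (h₁ : v₁ ≠ 0) (h₂ : v₂ ≠ 0) (y : ℝ) :
    (∫⁻ x, gaussianPDF μ₁ v₁ x * gaussianPDF (μ₂ + x) v₂ y)
      = gaussianPDF (μ₁ + μ₂) (v₁ + v₂) y := by
  simp_rw [gaussianPDF, ← ENNReal.ofReal_mul (gaussianPDFReal_nonneg μ₁ v₁ _)]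
  rw [← ofReal_integral_eq_lintegral_ofReal (integrable_conv_integrand μ₁ μ₂ v₁ v₂ y)
    (ae_of_all _ fun x => mul_nonneg (gaussianPDFReal_nonneg _ _ _) (gaussianPDFReal_nonneg _ _ _)),
    gaussianPDFReal_conv μ₁ μ₂ v₁ v₂ h₁ h₂ y]

lemma gaussianReal_conv (μ₁ μ₂ : ℝ) {v₁ v₂ : ℝ≥0} (h₁ : v₁ ≠ 0) (h₂ : v₂ ≠ 0) :
    Measure.conv (gaussianReal μ₁ v₁) (gaussianReal μ₂ v₂) = gaussianReal (μ₁ + μ₂) (v₁ + v₂) := by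
  have hmF : Measurable (fun p : ℝ × ℝ => gaussianPDF (μ₂ + p.1) v₂ p.2) := by
    simp only [gaussianPDF, gaussianPDFReal]
    fun_prop
  have hmG : Measurable (fun p : ℝ × ℝ => gaussianPDF μ₁ v₁ p.1 * gaussianPDF (μ₂ + p.1) v₂ p.2) :=
    ((measurable_gaussianPDF μ₁ v₁).comp measurable_fst).mul hmF
  have hne : ∀ x : ℝ, gaussianPDF μ₁ v₁ x ≠ ⊤ := fun x => ENNReal.ofReal_ne_top
  ext s hs
  unfold Measure.conv
  rw [Measure.map_apply measurable_add hs,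
    Measure.prod_apply (measurable_add hs)]
  have hstep : ∀ x : ℝ, gaussianReal μ₂ v₂ (Prod.mk x ⁻¹' ((fun p : ℝ × ℝ => p.1 + p.2) ⁻¹' s))
      = ∫⁻ y in s, gaussianPDF (μ₂ + x) v₂ y := by
    intro x
    have : (Prod.mk x ⁻¹' ((fun p : ℝ × ℝ => p.1 + p.2) ⁻¹' s)) = (fun y => x + y) ⁻¹' s := rfl
    rw [this, ← Measure.map_apply (measurable_const_add x) hs, gaussianReal_map_const_add,
      gaussianReal_apply _ h₂]
  simp_rw [hstep]
  rw [gaussianReal_of_var_ne_zero _ h₁,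
    lintegral_withDensity_eq_lintegral_mul _ (measurable_gaussianPDF μ₁ v₁)
      (Measurable.lintegral_prod_right (f := fun x y => gaussianPDF (μ₂ + x) v₂ y) hmF)]
  simp only [Pi.mul_apply]
  calc ∫⁻ x, gaussianPDF μ₁ v₁ x * ∫⁻ y in s, gaussianPDF (μ₂ + x) v₂ y
      = ∫⁻ x, ∫⁻ y in s, gaussianPDF μ₁ v₁ x * gaussianPDF (μ₂ + x) v₂ y := by
        refine lintegral_congr fun x => ?_
        rw [← lintegral_const_mul' _ _ (hne x)]
    _ = ∫⁻ y in s, ∫⁻ x, gaussianPDF μ₁ v₁ x * gaussianPDF (μ₂ + x) v₂ y := by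
        exact lintegral_lintegral_swap
          (Measurable.aemeasurable
            (f := Function.uncurry fun x y => gaussianPDF μ₁ v₁ x * gaussianPDF (μ₂ + x) v₂ y) hmG)
    _ = ∫⁻ y in s, gaussianPDF (μ₁ + μ₂) (v₁ + v₂) y :=
        lintegral_congr fun y => lintegral_gaussianPDF_conv μ₁ μ₂ v₁ v₂ h₁ h₂ y
    _ = gaussianReal (μ₁ + μ₂) (v₁ + v₂) s := (gaussianReal_apply _ (by simp [h₁]) s).symm

variable {Ω : Type*} [MeasurableSpace Ω]

lemma indep_map_add (P : Measure Ω) [IsProbabilityMeasure P] {X Y : Ω → ℝ}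
    (hX : Measurable X) (hY : Measurable Y) (hindep : IndepFun X Y P) :
    P.map (fun ω => X ω + Y ω) = Measure.conv (P.map X) (P.map Y) := by
  rw [indepFun_iff_map_prod_eq_prod_map_map hX.aemeasurable hY.aemeasurable] at hindep
  unfold Measure.conv
  rw [← hindep, Measure.map_map measurable_add (hX.prodMk hY)]
  rfl

lemma map_const_mul (P : Measure Ω) {X : Ω → ℝ} (hX : Measurable X) {m : ℝ} {v : ℝ≥0}
    (hlaw : P.map X = gaussianReal m v) (c : ℝ) :
    P.map (fun ω => c * X ω) = gaussianReal (c * m) (⟨c^2, sq_nonneg _⟩ * v) := by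
  have h : (fun ω => c * X ω) = (fun t => c * t) ∘ X := rfl
  rw [h, ← Measure.map_map (by fun_prop : Measurable fun t : ℝ => c * t) hX, hlaw, gaussianReal_map_const_mul]
  rfl

lemma map_add_const (P : Measure Ω) {X : Ω → ℝ} (hX : Measurable X) {m : ℝ} {v : ℝ≥0}
    (hlaw : P.map X = gaussianReal m v) (c : ℝ) :
    P.map (fun ω => X ω + c) = gaussianReal (m + c) v := by
  have h : (fun ω => X ω + c) = (fun t => t + c) ∘ X := rfl
  rw [h, ← Measure.map_map (by fun_prop : Measurable fun t : ℝ => t + c) hX, hlaw, gaussianReal_map_add_const]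

lemma coe_anon (x : ℝ) (h : 0 ≤ x) : ((⟨x, h⟩ : ℝ≥0) : ℝ) = x := rfl

lemma coe_anon_mul (x : ℝ) (h : 0 ≤ x) (v : ℝ≥0) : ((⟨x, h⟩ * v : ℝ≥0) : ℝ) = x * v := rfl

end DDPMAux


/-- One step of the DDPM reverse process with the exact posterior transition
`N(a·z_t + b·z₀, β̃)`, started from the forward marginal `N(√ᾱ_t·z₀, 1−ᾱ_t)` at step `t`,
reproduces the forward marginal `N(√ᾱ_{t−1}·z₀, 1−ᾱ_{t−1})` at step `t−1`. -/
theorem ddpm_reverse_one_step {Ω : Type*} [MeasurableSpace Ω]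
    (P : Measure Ω) [IsProbabilityMeasure P]
    (βt ᾱprev αt ᾱt a b βtil : ℝ)
    (hβt : βt ∈ Set.Ioo (0 : ℝ) 1) (hᾱprev : ᾱprev ∈ Set.Ioo (0 : ℝ) 1)
    (hαt : αt = 1 - βt) (hᾱt : ᾱt = αt * ᾱprev)
    (ha : a = Real.sqrt αt * (1 - ᾱprev) / (1 - ᾱt))
    (hb : b = Real.sqrt ᾱprev * βt / (1 - ᾱt))
    (hβtil : βtil = (1 - ᾱprev) * βt / (1 - ᾱt))
    (z₀ : ℝ) (Zt ε' : Ω → ℝ) (hZt : Measurable Zt) (hε' : Measurable ε')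
    (hindep : IndepFun Zt ε' P)
    (hZtlaw : P.map Zt = gaussianReal (Real.sqrt ᾱt * z₀) (1 - ᾱt).toNNReal)
    (hε'law : P.map ε' = gaussianReal 0 1) :
    P.map (fun ω => a * Zt ω + b * z₀ + Real.sqrt βtil * ε' ω)
      = gaussianReal (Real.sqrt ᾱprev * z₀) (1 - ᾱprev).toNNReal := by
  obtain ⟨hβ0, hβ1⟩ := hβt
  obtain ⟨hᾱp0, hᾱp1⟩ := hᾱprev
  have hαt0 : 0 < αt := by rw [hαt]; linarith
  have hαt1 : αt < 1 := by rw [hαt]; linarith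
  have hᾱt1 : ᾱt < 1 := by
    rw [hᾱt]
    calc αt * ᾱprev < 1 * 1 := by
          apply mul_lt_mul' hαt1.le hᾱp1 hᾱp0.le one_pos
      _ = 1 := mul_one 1
  have hᾱt0 : 0 < ᾱt := by rw [hᾱt]; positivity
  have h1t : (0:ℝ) < 1 - ᾱt := by linarith
  have h1p : (0:ℝ) < 1 - ᾱprev := by linarith
  have hβtil0 : 0 < βtil := by rw [hβtil]; positivity
  have ha0 : 0 < a := by rw [ha]; positivity
  -- sqrt facts
  have hsα : Real.sqrt αt * Real.sqrt αt = αt := Real.mul_self_sqrt hαt0.le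
  have hsβ : Real.sqrt βtil * Real.sqrt βtil = βtil := Real.mul_self_sqrt hβtil0.le
  have hsbar : Real.sqrt ᾱt = Real.sqrt αt * Real.sqrt ᾱprev := by
    rw [hᾱt, Real.sqrt_mul hαt0.le]
  -- laws of the two summands
  have hXlaw : P.map (fun ω => a * Zt ω + b * z₀)
      = gaussianReal (a * (Real.sqrt ᾱt * z₀) + b * z₀)
          (⟨a^2, sq_nonneg _⟩ * (1 - ᾱt).toNNReal) :=
    DDPMAux.map_add_const P (hZt.const_mul a)
      (DDPMAux.map_const_mul P hZt hZtlaw a) (b * z₀)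
  have hYlaw : P.map (fun ω => Real.sqrt βtil * ε' ω)
      = gaussianReal 0 βtil.toNNReal := by
    have := DDPMAux.map_const_mul P hε' hε'law (Real.sqrt βtil)
    rw [mul_zero] at this
    convert this using 2
    ext
    rw [DDPMAux.coe_anon_mul]
    simp only [NNReal.coe_mul, NNReal.coe_mk, DDPMAux.coe_anon, NNReal.coe_one, mul_one]
    rw [Real.coe_toNNReal _ hβtil0.le, Real.sq_sqrt hβtil0.le]
  -- independence of the two summands
  have hXY : IndepFun (fun ω => a * Zt ω + b * z₀) (fun ω => Real.sqrt βtil * ε' ω) P :=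
    hindep.comp ((measurable_id.const_mul a).add_const (b * z₀))
      (measurable_id.const_mul (Real.sqrt βtil))
  have hmap := DDPMAux.indep_map_add P ((hZt.const_mul a).add_const (b * z₀))
    (hε'.const_mul (Real.sqrt βtil)) hXY
  have hβ' : βt = 1 - αt := by rw [hαt]; ring
  have hvXne : (⟨a^2, sq_nonneg a⟩ * (1 - ᾱt).toNNReal : ℝ≥0) ≠ 0 := by
    apply mul_ne_zero
    · intro h
      have h2 : a^2 = 0 := congrArg NNReal.toReal h
      nlinarith
    · simp only [ne_eq, Real.toNNReal_eq_zero, not_le]; linarith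
  have hvYne : (βtil.toNNReal : ℝ≥0) ≠ 0 := by
    simp only [ne_eq, Real.toNNReal_eq_zero, not_le]; linarith
  rw [hmap, hXlaw, hYlaw, DDPMAux.gaussianReal_conv _ _ hvXne hvYne]
  congr 1
  · -- means
    rw [add_zero, ha, hb, hsbar]
    rw [div_mul_eq_mul_div, div_mul_eq_mul_div, ← add_div, div_eq_iff h1t.ne']
    rw [hβ', hᾱt]
    linear_combination ((1 - ᾱprev) * Real.sqrt ᾱprev * z₀) * hsα
  · -- variances
    have hne2 : (1:ℝ) - αt * ᾱprev ≠ 0 := by rw [← hᾱt]; exact h1t.ne'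
    ext
    simp only [NNReal.coe_add, NNReal.coe_mul, NNReal.coe_mk, DDPMAux.coe_anon,
      Real.coe_toNNReal _ h1t.le, Real.coe_toNNReal _ h1p.le, Real.coe_toNNReal _ hβtil0.le]
    rw [DDPMAux.coe_anon_mul, Real.coe_toNNReal _ h1t.le]
    rw [ha, hβtil, div_pow, mul_pow, Real.sq_sqrt hαt0.le, hβ', hᾱt]
    field_simp
    ring
end
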